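/- In a hidden Markov chain model, the partial state sequence entropy satisfies, for every 1 ≤ t ≤ T−1: H(S_0^t | X = x) = Σ_j P(S_t = j | X = x) { H(S_0^{t−1} | S_t = j, X_0^t = x_0^t) − log P(S_t = j | X = x) }, the sum ranging over the states j with P(S_t = j | X = x) > 0; equivalently, H(S_0^t | X = x) = H(S_0^{t−1} | S_t, X = x) + H(S_t | X = x) with H(S_0^{t−1} | S_t = j, X = x) = H(S_0^{t−1} | S_t = j, X_0^t = x_0^t). -/

import Mathlib

/-- A hidden Markov chain (HMC) model with `J` states, observation alphabet
`{0, …, V-1}` and sequence length `T`: initial probabilities, transition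
probabilities and emission probabilities. -/
structure HMCModel (J V T : ℕ) where
  init : Fin J → ℝ
  trans : Fin J → Fin J → ℝ
  emit : Fin J → Fin V → ℝ
  init_nonneg : ∀ j, 0 ≤ init j
  init_sum : ∑ j, init j = 1
  trans_nonneg : ∀ i j, 0 ≤ trans i j
  trans_sum : ∀ i, ∑ j, trans i j = 1
  emit_nonneg : ∀ j y, 0 ≤ emit j y
  emit_sum : ∀ j, ∑ y, emit j y = 1

namespace HMCModel

variable {J V T : ℕ} [NeZero J] [NeZero T]

/-- The joint law of the state sequence and the observed sequence:
`P(S = s, X = x) = π_{s_0} b_{s_0}(x_0) ∏_{t=1}^{T-1} p_{s_{t-1} s_t} b_{s_t}(x_t)`. -/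
noncomputable def joint (M : HMCModel J V T) (s : Fin T → Fin J) (x : Fin T → Fin V) : ℝ :=
  M.init (s 0) * M.emit (s 0) (x 0) *
    ∏ t ∈ Finset.univ.filter (fun t : Fin T => t ≠ 0),
      M.trans (s (t - 1)) (s t) * M.emit (s t) (x t)

open Classical in
/-- Probability of an event on (state sequence, observed sequence). -/
noncomputable def pr (M : HMCModel J V T)
    (E : (Fin T → Fin J) → (Fin T → Fin V) → Prop) : ℝ :=
  ∑ s : Fin T → Fin J, ∑ y : Fin T → Fin V, if E s y then M.joint s y else 0

/-- Conditional probability `P(A | B)`; it is `0` when the conditioning event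
has probability zero. -/
noncomputable def cpr (M : HMCModel J V T)
    (A B : (Fin T → Fin J) → (Fin T → Fin V) → Prop) : ℝ :=
  if 0 < M.pr B then M.pr (fun s y => A s y ∧ B s y) / M.pr B else 0

/-- Entropy of the random vector `f(S)` given the event `E`
(natural logarithm, with the convention `0 log 0 = 0`). -/
noncomputable def condEnt (M : HMCModel J V T) {α : Type*} [Fintype α]
    (f : (Fin T → Fin J) → α)
    (E : (Fin T → Fin J) → (Fin T → Fin V) → Prop) : ℝ :=
  -∑ a : α, M.cpr (fun s _ => f s = a) E * Real.log (M.cpr (fun s _ => f s = a) E)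

/-- Entropy of `f(S)` given the random vector `g(S)` and the event `E`:
`H(f(S) | g(S), E) = ∑_c P(g(S) = c | E) H(f(S) | g(S) = c, E)`. -/
noncomputable def condEntGiven (M : HMCModel J V T) {α β : Type*} [Fintype α] [Fintype β]
    (f : (Fin T → Fin J) → α) (g : (Fin T → Fin J) → β)
    (E : (Fin T → Fin J) → (Fin T → Fin V) → Prop) : ℝ :=
  ∑ c : β, M.cpr (fun s _ => g s = c) E * M.condEnt f (fun s y => g s = c ∧ E s y)

/-- The event `X = x`. -/
def obsEq (x : Fin T → Fin V) : (Fin T → Fin J) → (Fin T → Fin V) → Prop :=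
  fun _ y => y = x

/-- The partial state vector `S_0^{t-1}` (coordinates `≥ t` are padded by `0`). -/
def prefixVar (t : ℕ) (s : Fin T → Fin J) : Fin T → Fin J :=
  fun r => if (r : ℕ) < t then s r else 0

/-- The partial state vector `S_t^{T-1}` (coordinates `< t` are padded by `0`). -/
def suffixVar (t : ℕ) (s : Fin T → Fin J) : Fin T → Fin J :=
  fun r => if t ≤ (r : ℕ) then s r else 0

end HMCModel

set_option linter.unusedSectionVars false
namespace HMCModel


variable {J V T : ℕ} [NeZero J] [NeZero T] (M : HMCModel J V T)

lemma joint_nonneg (s : Fin T → Fin J) (y : Fin T → Fin V) : 0 ≤ M.joint s y := by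
  refine mul_nonneg (mul_nonneg (M.init_nonneg _) (M.emit_nonneg _ _)) ?_
  exact Finset.prod_nonneg fun r _ => mul_nonneg (M.trans_nonneg _ _) (M.emit_nonneg _ _)

lemma pr_nonneg (E : (Fin T → Fin J) → (Fin T → Fin V) → Prop) : 0 ≤ M.pr E := by
  classical
  refine Finset.sum_nonneg fun s _ => Finset.sum_nonneg fun y _ => ?_
  split
  · exact M.joint_nonneg s y
  · exact le_refl _

lemma pr_congr {E E' : (Fin T → Fin J) → (Fin T → Fin V) → Prop}
    (h : ∀ s y, E s y ↔ E' s y) : M.pr E = M.pr E' := by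
  classical
  simp only [pr]
  refine Finset.sum_congr rfl fun s _ => Finset.sum_congr rfl fun y _ => ?_
  simp [h s y]

lemma pr_eq_zero {E : (Fin T → Fin J) → (Fin T → Fin V) → Prop}
    (h : ∀ s y, ¬ E s y) : M.pr E = 0 := by
  classical
  simp only [pr]
  refine Finset.sum_eq_zero fun s _ => Finset.sum_eq_zero fun y _ => ?_
  simp [h s y]

lemma pr_mono {E E' : (Fin T → Fin J) → (Fin T → Fin V) → Prop}
    (h : ∀ s y, E s y → E' s y) : M.pr E ≤ M.pr E' := by
  classical
  refine Finset.sum_le_sum fun s _ => Finset.sum_le_sum fun y _ => ?_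
  by_cases hE : E s y
  · simp [hE, h s y hE]
  · simp only [hE, if_false]
    split
    · exact M.joint_nonneg s y
    · exact le_refl _

lemma cpr_nonneg (A B : (Fin T → Fin J) → (Fin T → Fin V) → Prop) :
    0 ≤ M.cpr A B := by
  unfold cpr
  split
  · exact div_nonneg (M.pr_nonneg _) (M.pr_nonneg _)
  · exact le_refl _

lemma pr_partition {β : Type*} [Fintype β] (g : (Fin T → Fin J) → β)
    (E : (Fin T → Fin J) → (Fin T → Fin V) → Prop) :
    M.pr E = ∑ c : β, M.pr (fun s y => g s = c ∧ E s y) := by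
  classical
  symm
  simp only [pr]
  rw [Finset.sum_comm]
  refine Finset.sum_congr rfl fun s _ => ?_
  rw [Finset.sum_comm]
  refine Finset.sum_congr rfl fun y _ => ?_
  by_cases hE : E s y
  · simp [hE, Finset.sum_ite_eq' Finset.univ (g s)]
  · simp [hE]

end HMCModel

namespace HMCModel
variable {J V T : ℕ} [NeZero J] [NeZero T] (M : HMCModel J V T)

/-- The "past" factor of the joint law, up to time `t`. -/
noncomputable def Afun (t : Fin T) (s : Fin T → Fin J) (y : Fin T → Fin V) : ℝ :=
  M.init (s 0) * M.emit (s 0) (y 0) *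
    ∏ r ∈ Finset.univ.filter (fun r : Fin T => r ≠ 0 ∧ r ≤ t),
      M.trans (s (r - 1)) (s r) * M.emit (s r) (y r)

/-- The "future" factor of the joint law, after time `t`. -/
noncomputable def Bfun (t : Fin T) (s : Fin T → Fin J) (y : Fin T → Fin V) : ℝ :=
  ∏ r ∈ Finset.univ.filter (fun r : Fin T => r ≠ 0 ∧ ¬ r ≤ t),
    M.trans (s (r - 1)) (s r) * M.emit (s r) (y r)

lemma joint_split (t : Fin T) (s : Fin T → Fin J) (y : Fin T → Fin V) :
    M.joint s y = M.Afun t s y * M.Bfun t s y := by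
  classical
  unfold joint Afun Bfun
  conv_rhs => rw [mul_assoc]
  congr 1
  rw [← Finset.prod_filter_mul_prod_filter_not
    (Finset.univ.filter (fun r : Fin T => r ≠ 0)) (fun r => r ≤ t)]
  rw [Finset.filter_filter, Finset.filter_filter]

lemma val_sub_one_of_ne_zero {r : Fin T} (hr : r ≠ 0) :
    ((r - 1 : Fin T) : ℕ) = (r : ℕ) - 1 := by
  obtain ⟨n, rfl⟩ : ∃ n, T = n + 1 := ⟨T - 1, (Nat.succ_pred_eq_of_pos (NeZero.pos T)).symm⟩
  rw [Fin.coe_sub_one, if_neg hr]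

lemma sub_one_le_of_ne_zero {r : Fin T} (hr : r ≠ 0) (u : Fin T) (h : r ≤ u) :
    r - 1 ≤ u := by
  rw [Fin.le_def] at h ⊢
  rw [val_sub_one_of_ne_zero hr]
  omega

lemma le_sub_one_of_lt {u r : Fin T} (h : u < r) : u ≤ r - 1 := by
  have hr : r ≠ 0 := by
    intro hr0
    subst hr0
    simp only [Fin.lt_def, Fin.val_zero] at h
    omega
  rw [Fin.lt_def] at h
  rw [Fin.le_def, val_sub_one_of_ne_zero hr]
  omega

lemma Afun_congr (t : Fin T) {s s' : Fin T → Fin J} {y y' : Fin T → Fin V}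
    (hs : ∀ r, r ≤ t → s r = s' r) (hy : ∀ r, r ≤ t → y r = y' r) :
    M.Afun t s y = M.Afun t s' y' := by
  unfold Afun
  have h0 : (0 : Fin T) ≤ t := Fin.zero_le t
  rw [hs 0 h0, hy 0 h0]
  congr 1
  refine Finset.prod_congr rfl fun r hr => ?_
  simp only [Finset.mem_filter, Finset.mem_univ, true_and] at hr
  rw [hs r hr.2, hy r hr.2, hs (r - 1) (sub_one_le_of_ne_zero hr.1 t hr.2)]

lemma Bfun_congr (t : Fin T) {s s' : Fin T → Fin J} {y y' : Fin T → Fin V}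
    (hs : ∀ r, t ≤ r → s r = s' r) (hy : ∀ r, t < r → y r = y' r) :
    M.Bfun t s y = M.Bfun t s' y' := by
  unfold Bfun
  refine Finset.prod_congr rfl fun r hr => ?_
  simp only [Finset.mem_filter, Finset.mem_univ, true_and] at hr
  have hlt : t < r := lt_of_not_ge hr.2
  rw [hs r (le_of_lt hlt), hy r hlt, hs (r - 1) (le_sub_one_of_lt hlt)]

lemma Afun_nonneg (t : Fin T) (s : Fin T → Fin J) (y : Fin T → Fin V) :
    0 ≤ M.Afun t s y := by
  refine mul_nonneg (mul_nonneg (M.init_nonneg _) (M.emit_nonneg _ _)) ?_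
  exact Finset.prod_nonneg fun r _ => mul_nonneg (M.trans_nonneg _ _) (M.emit_nonneg _ _)

lemma Bfun_nonneg (t : Fin T) (s : Fin T → Fin J) (y : Fin T → Fin V) :
    0 ≤ M.Bfun t s y :=
  Finset.prod_nonneg fun r _ => mul_nonneg (M.trans_nonneg _ _) (M.emit_nonneg _ _)

end HMCModel

namespace HMCModel
variable {J V T : ℕ} [NeZero J] [NeZero T] (M : HMCModel J V T)

lemma prefixVar_idem (k : ℕ) (s : Fin T → Fin J) :
    prefixVar k (prefixVar k s) = prefixVar k s := by
  funext r
  unfold prefixVar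
  by_cases h : (r : ℕ) < k <;> simp [h]

lemma valid_apply {k : ℕ} {c : Fin T → Fin J} (hc : prefixVar k c = c)
    {r : Fin T} (hr : ¬ (r : ℕ) < k) : c r = 0 := by
  have := congrFun hc r
  unfold prefixVar at this
  rw [if_neg hr] at this
  exact this.symm

lemma valid_lt_apply {k : ℕ} {s c : Fin T → Fin J} (hsc : prefixVar k s = c)
    {r : Fin T} (hr : (r : ℕ) < k) : s r = c r := by
  have := congrFun hsc r
  unfold prefixVar at this
  rw [if_pos hr] at this
  exact this

/-- Filter with a canonical (classical) decidability instance. -/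
noncomputable def pfilter {κ : Type*} [Fintype κ] (p : κ → Prop) : Finset κ :=
  @Finset.filter κ p (fun _ => Classical.propDecidable _) Finset.univ

lemma mem_pfilter {κ : Type*} [Fintype κ] {p : κ → Prop} {a : κ} :
    a ∈ pfilter p ↔ p a := by
  unfold pfilter
  rw [@Finset.mem_filter κ p (fun _ => Classical.propDecidable _)]
  simp

lemma pfilter_eq_singleton {κ : Type*} [Fintype κ] [DecidableEq κ] (x : κ) :
    pfilter (fun y => y = x) = {x} := by
  refine Finset.ext fun y => ?_
  rw [mem_pfilter, Finset.mem_singleton]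

/-- `P(W) = ∑_{s : P s} ∑_{y : R y} joint s y` when `W s y ↔ P s ∧ R y`. -/
lemma pr_eq_sum_sum (W : (Fin T → Fin J) → (Fin T → Fin V) → Prop)
    (P : (Fin T → Fin J) → Prop) (R : (Fin T → Fin V) → Prop)
    (hW : ∀ s y, W s y ↔ P s ∧ R y) :
    M.pr W = ∑ s ∈ pfilter P, ∑ y ∈ pfilter R, M.joint s y := by
  simp only [pr, pfilter, Finset.sum_filter]
  refine Finset.sum_congr rfl fun s _ => ?_
  by_cases hP : P s
  · rw [if_pos hP]
    refine Finset.sum_congr rfl fun y _ => ?_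
    by_cases hR : R y
    · rw [if_pos hR, if_pos ((hW s y).mpr ⟨hP, hR⟩)]
    · rw [if_neg hR, if_neg (fun h => hR ((hW s y).mp h).2)]
  · rw [if_neg hP]
    refine Finset.sum_eq_zero fun y _ => ?_
    exact if_neg (fun h => hP ((hW s y).mp h).1)

/-- Special case: the observation is pinned to `x`. -/
lemma pr_eq_sum_obs (W : (Fin T → Fin J) → (Fin T → Fin V) → Prop)
    (P : (Fin T → Fin J) → Prop) (x : Fin T → Fin V)
    (hW : ∀ s y, W s y ↔ P s ∧ y = x) :
    M.pr W = ∑ s ∈ pfilter P, M.joint s x := by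
  classical
  rw [M.pr_eq_sum_sum W P (fun y => y = x) hW]
  refine Finset.sum_congr rfl fun s _ => ?_
  rw [pfilter_eq_singleton x]
  simp

/-- The set of state sequences with prefix `c` and value `j` at time `t`. -/
noncomputable def SSet (t : Fin T) (c : Fin T → Fin J) (j : Fin J) :
    Finset (Fin T → Fin J) :=
  pfilter (fun s => prefixVar (t : ℕ) s = c ∧ s t = j)

/-- The set of observation sequences agreeing with `x` up to time `t`. -/
noncomputable def YSet (x : Fin T → Fin V) (t : Fin T) : Finset (Fin T → Fin V) :=
  pfilter (fun y => ∀ r, r ≤ t → y r = x r)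

lemma sum_SSet_invariant (t : Fin T) (j : Fin J) (F : (Fin T → Fin J) → ℝ)
    (hF : ∀ s s', (∀ r, t ≤ r → s r = s' r) → F s = F s')
    {c : Fin T → Fin J} (hc : prefixVar (t : ℕ) c = c) :
    ∑ s ∈ SSet t c j, F s = ∑ s ∈ SSet (J := J) t (fun _ => 0) j, F s := by
  refine Finset.sum_nbij' (i := fun s r => if (r : ℕ) < (t : ℕ) then 0 else s r)
    (j := fun s r => if (r : ℕ) < (t : ℕ) then c r else s r) ?_ ?_ ?_ ?_ ?_
  · intro s hs
    rw [SSet, mem_pfilter] at hs ⊢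
    constructor
    · funext r
      unfold prefixVar
      by_cases h : (r : ℕ) < (t : ℕ) <;> simp [h]
    · show (if (t : ℕ) < (t : ℕ) then 0 else s t) = j
      rw [if_neg (lt_irrefl _), hs.2]
  · intro s hs
    rw [SSet, mem_pfilter] at hs ⊢
    constructor
    · funext r
      unfold prefixVar
      by_cases h : (r : ℕ) < (t : ℕ)
      · simp [h]
      · simp only [h, if_false]
        exact (valid_apply hc h).symm
    · show (if (t : ℕ) < (t : ℕ) then c t else s t) = j
      rw [if_neg (lt_irrefl _), hs.2]
  · intro s hs
    rw [SSet, mem_pfilter] at hs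
    funext r
    show (if (r : ℕ) < (t : ℕ) then c r else if (r : ℕ) < (t : ℕ) then 0 else s r) = s r
    by_cases h : (r : ℕ) < (t : ℕ)
    · rw [if_pos h]
      exact (valid_lt_apply hs.1 h).symm
    · rw [if_neg h, if_neg h]
  · intro s hs
    rw [SSet, mem_pfilter] at hs
    funext r
    show (if (r : ℕ) < (t : ℕ) then 0 else if (r : ℕ) < (t : ℕ) then c r else s r) = s r
    by_cases h : (r : ℕ) < (t : ℕ)
    · rw [if_pos h]
      exact (valid_lt_apply hs.1 h).symm
    · rw [if_neg h, if_neg h]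
  · intro s hs
    refine hF _ _ fun r hr => ?_
    exact (if_neg (not_lt.mpr (Fin.le_def.mp hr))).symm

/-- Gluing a prefix with a value at time `t`. -/
def glue (t : Fin T) (c : Fin T → Fin J) (j : Fin J) : Fin T → Fin J :=
  fun r => if r = t then j else c r

end HMCModel

namespace HMCModel
variable {J V T : ℕ} [NeZero J] [NeZero T] (M : HMCModel J V T)

noncomputable def alphaF (x : Fin T → Fin V) (t : Fin T) (c : Fin T → Fin J) (j : Fin J) : ℝ :=
  M.Afun t (glue t c j) x

noncomputable def gammaF (x : Fin T → Fin V) (t : Fin T) (j : Fin J) : ℝ :=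
  ∑ s ∈ SSet (J := J) t (fun _ => 0) j, M.Bfun t s x

noncomputable def betaF (x : Fin T → Fin V) (t : Fin T) (j : Fin J) : ℝ :=
  ∑ s ∈ SSet (J := J) t (fun _ => 0) j, ∑ y ∈ YSet x t, M.Bfun t s y

noncomputable def SAF (x : Fin T → Fin V) (t : Fin T) (j : Fin J) : ℝ :=
  ∑ c ∈ pfilter (fun c : Fin T → Fin J => prefixVar (t : ℕ) c = c), M.alphaF x t c j

lemma sum_pfilter_eq {κ : Type*} [Fintype κ] (p : κ → Prop) [DecidablePred p] (f : κ → ℝ) :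
    ∑ a ∈ pfilter p, f a = ∑ a ∈ Finset.univ.filter p, f a := by
  refine Finset.sum_congr ?_ fun a _ => rfl
  refine Finset.ext fun a => ?_
  rw [mem_pfilter, Finset.mem_filter]
  simp

lemma agree_glue {t : Fin T} {s c : Fin T → Fin J} {j : Fin J}
    (h1 : prefixVar (t : ℕ) s = c) (h2 : s t = j) :
    ∀ r, r ≤ t → s r = glue t c j r := by
  intro r hr
  unfold glue
  by_cases h : r = t
  · subst h
    simp [h2]
  · rw [if_neg h]
    have hlt : (r : ℕ) < (t : ℕ) :=
      lt_of_le_of_ne (Fin.le_def.mp hr) (fun he => h (Fin.ext he))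
    exact valid_lt_apply h1 hlt

lemma pr_prefix_invalid {t : Fin T} {c : Fin T → Fin J} (hc : prefixVar (t : ℕ) c ≠ c)
    (P : (Fin T → Fin J) → (Fin T → Fin V) → Prop) :
    M.pr (fun s y => prefixVar (t : ℕ) s = c ∧ P s y) = 0 := by
  refine M.pr_eq_zero fun s y h => hc ?_
  rw [← h.1, prefixVar_idem]

lemma pr_eq_alpha_gamma {x : Fin T → Fin V} {t : Fin T} {c : Fin T → Fin J} {j : Fin J}
    (hc : prefixVar (t : ℕ) c = c) :
    M.pr (fun s y => prefixVar (t : ℕ) s = c ∧ (s t = j ∧ y = x))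
      = M.alphaF x t c j * M.gammaF x t j := by
  rw [M.pr_eq_sum_obs _ (fun s => prefixVar (t : ℕ) s = c ∧ s t = j) x (by tauto)]
  show ∑ s ∈ SSet t c j, M.joint s x = _
  calc ∑ s ∈ SSet t c j, M.joint s x
      = ∑ s ∈ SSet t c j, M.alphaF x t c j * M.Bfun t s x := by
        refine Finset.sum_congr rfl fun s hs => ?_
        rw [SSet, mem_pfilter] at hs
        rw [M.joint_split t]
        exact congrArg (· * M.Bfun t s x)
          (M.Afun_congr t (agree_glue hs.1 hs.2) fun r _ => rfl)
    _ = M.alphaF x t c j * ∑ s ∈ SSet t c j, M.Bfun t s x := (Finset.mul_sum _ _ _).symm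
    _ = M.alphaF x t c j * M.gammaF x t j := by
        rw [sum_SSet_invariant t j (fun s => M.Bfun t s x)
          (fun s s' h => M.Bfun_congr t h fun _ _ => rfl) hc]
        rfl

lemma pr_eq_alpha_beta {x : Fin T → Fin V} {t : Fin T} {c : Fin T → Fin J} {j : Fin J}
    (hc : prefixVar (t : ℕ) c = c) :
    M.pr (fun s y => prefixVar (t : ℕ) s = c ∧ (s t = j ∧ ∀ r, r ≤ t → y r = x r))
      = M.alphaF x t c j * M.betaF x t j := by
  rw [M.pr_eq_sum_sum _ (fun s => prefixVar (t : ℕ) s = c ∧ s t = j)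
    (fun y => ∀ r, r ≤ t → y r = x r) (by tauto)]
  show ∑ s ∈ SSet t c j, ∑ y ∈ YSet x t, M.joint s y = _
  calc ∑ s ∈ SSet t c j, ∑ y ∈ YSet x t, M.joint s y
      = ∑ s ∈ SSet t c j, ∑ y ∈ YSet x t, M.alphaF x t c j * M.Bfun t s y := by
        refine Finset.sum_congr rfl fun s hs => Finset.sum_congr rfl fun y hy => ?_
        rw [SSet, mem_pfilter] at hs
        rw [YSet, mem_pfilter] at hy
        rw [M.joint_split t]
        exact congrArg (· * M.Bfun t s y)
          (M.Afun_congr t (agree_glue hs.1 hs.2) hy)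
    _ = M.alphaF x t c j * ∑ s ∈ SSet t c j, ∑ y ∈ YSet x t, M.Bfun t s y := by
        simp only [← Finset.mul_sum]
    _ = M.alphaF x t c j * M.betaF x t j := by
        rw [sum_SSet_invariant t j (fun s => ∑ y ∈ YSet x t, M.Bfun t s y)
          (fun s s' h => Finset.sum_congr rfl fun y _ => M.Bfun_congr t h fun _ _ => rfl) hc]
        rfl

lemma pr_st_obs (x : Fin T → Fin V) (t : Fin T) (j : Fin J) :
    M.pr (fun s y => s t = j ∧ y = x) = M.SAF x t j * M.gammaF x t j := by
  classical
  have h1 : ∀ c, M.pr (fun s y => prefixVar (t : ℕ) s = c ∧ (s t = j ∧ y = x))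
      = (if prefixVar (t : ℕ) c = c then M.alphaF x t c j else 0) * M.gammaF x t j := by
    intro c
    by_cases hc : prefixVar (t : ℕ) c = c
    · rw [if_pos hc]
      exact M.pr_eq_alpha_gamma hc
    · rw [if_neg hc, zero_mul]
      exact M.pr_prefix_invalid hc _
  refine Eq.trans (M.pr_partition (prefixVar (t : ℕ)) _) ?_
  refine Eq.trans (Finset.sum_congr rfl fun c _ => h1 c) ?_
  rw [← Finset.sum_mul]
  congr 1
  rw [← Finset.sum_filter, SAF, sum_pfilter_eq]

lemma pr_st_pref (x : Fin T → Fin V) (t : Fin T) (j : Fin J) :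
    M.pr (fun s y => s t = j ∧ ∀ r, r ≤ t → y r = x r)
      = M.SAF x t j * M.betaF x t j := by
  classical
  have h1 : ∀ c, M.pr (fun s y => prefixVar (t : ℕ) s = c ∧ (s t = j ∧ ∀ r, r ≤ t → y r = x r))
      = (if prefixVar (t : ℕ) c = c then M.alphaF x t c j else 0) * M.betaF x t j := by
    intro c
    by_cases hc : prefixVar (t : ℕ) c = c
    · rw [if_pos hc]
      exact M.pr_eq_alpha_beta hc
    · rw [if_neg hc, zero_mul]
      exact M.pr_prefix_invalid hc _
  refine Eq.trans (M.pr_partition (prefixVar (t : ℕ)) _) ?_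
  refine Eq.trans (Finset.sum_congr rfl fun c _ => h1 c) ?_
  rw [← Finset.sum_mul]
  congr 1
  rw [← Finset.sum_filter, SAF, sum_pfilter_eq]

lemma alphaF_nonneg (x : Fin T → Fin V) (t : Fin T) (c : Fin T → Fin J) (j : Fin J) :
    0 ≤ M.alphaF x t c j := M.Afun_nonneg t _ x

lemma gammaF_nonneg (x : Fin T → Fin V) (t : Fin T) (j : Fin J) : 0 ≤ M.gammaF x t j :=
  Finset.sum_nonneg fun s _ => M.Bfun_nonneg t s x

lemma betaF_nonneg (x : Fin T → Fin V) (t : Fin T) (j : Fin J) : 0 ≤ M.betaF x t j :=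
  Finset.sum_nonneg fun s _ => Finset.sum_nonneg fun y _ => M.Bfun_nonneg t s y

lemma SAF_nonneg (x : Fin T → Fin V) (t : Fin T) (j : Fin J) : 0 ≤ M.SAF x t j :=
  Finset.sum_nonneg fun c _ => M.alphaF_nonneg x t c j

lemma gammaF_le_betaF (x : Fin T → Fin V) (t : Fin T) (j : Fin J) :
    M.gammaF x t j ≤ M.betaF x t j := by
  refine Finset.sum_le_sum fun s _ => ?_
  have hx : x ∈ YSet x t := by
    rw [YSet, mem_pfilter]
    exact fun r _ => rfl
  exact Finset.single_le_sum (fun y _ => M.Bfun_nonneg t s y) hx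

end HMCModel

namespace HMCModel
variable {J V T : ℕ} [NeZero J] [NeZero T] (M : HMCModel J V T)

lemma cpr_of_pos (A : (Fin T → Fin J) → (Fin T → Fin V) → Prop)
    {B : (Fin T → Fin J) → (Fin T → Fin V) → Prop} (h : 0 < M.pr B) :
    M.cpr A B = M.pr (fun s y => A s y ∧ B s y) / M.pr B := by
  unfold cpr
  rw [if_pos h]

lemma cpr_of_nonpos (A : (Fin T → Fin J) → (Fin T → Fin V) → Prop)
    {B : (Fin T → Fin J) → (Fin T → Fin V) → Prop} (h : ¬ 0 < M.pr B) :
    M.cpr A B = 0 := by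
  unfold cpr
  rw [if_neg h]

lemma cpr_markov {x : Fin T → Fin V} {t : Fin T} {j : Fin J}
    (hR : 0 < M.pr (fun s y => s t = j ∧ y = x)) (c : Fin T → Fin J) :
    M.cpr (fun s _ => prefixVar (t : ℕ) s = c) (fun s y => s t = j ∧ y = x)
      = M.cpr (fun s _ => prefixVar (t : ℕ) s = c)
          (fun s y => s t = j ∧ ∀ r, r ≤ t → y r = x r) := by
  have hSAγ : 0 < M.SAF x t j * M.gammaF x t j := by
    rw [← M.pr_st_obs]
    exact hR
  have hSA : 0 < M.SAF x t j := by
    rcases mul_pos_iff.mp hSAγ with ⟨h1, _⟩ | ⟨h1, _⟩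
    · exact h1
    · exact absurd (M.SAF_nonneg x t j) (not_le.mpr h1)
  have hγ : 0 < M.gammaF x t j := by
    rcases mul_pos_iff.mp hSAγ with ⟨_, h2⟩ | ⟨_, h2⟩
    · exact h2
    · exact absurd (M.gammaF_nonneg x t j) (not_le.mpr h2)
  have hβ : 0 < M.betaF x t j := lt_of_lt_of_le hγ (M.gammaF_le_betaF x t j)
  have hR' : 0 < M.pr (fun s y => s t = j ∧ ∀ r, r ≤ t → y r = x r) := by
    rw [M.pr_st_pref]
    exact mul_pos hSA hβ
  rw [M.cpr_of_pos _ hR, M.cpr_of_pos _ hR']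
  by_cases hc : prefixVar (t : ℕ) c = c
  · have e1 : M.pr (fun s y => prefixVar (t : ℕ) s = c ∧ (s t = j ∧ y = x))
        = M.alphaF x t c j * M.gammaF x t j := M.pr_eq_alpha_gamma hc
    have e2 : M.pr (fun s y => prefixVar (t : ℕ) s = c ∧ (s t = j ∧ ∀ r, r ≤ t → y r = x r))
        = M.alphaF x t c j * M.betaF x t j := M.pr_eq_alpha_beta hc
    show M.pr (fun s y => prefixVar (t : ℕ) s = c ∧ (s t = j ∧ y = x))
        / M.pr (fun s y => s t = j ∧ y = x)
      = M.pr (fun s y => prefixVar (t : ℕ) s = c ∧ (s t = j ∧ ∀ r, r ≤ t → y r = x r))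
        / M.pr (fun s y => s t = j ∧ ∀ r, r ≤ t → y r = x r)
    rw [e1, e2, M.pr_st_obs, M.pr_st_pref,
      mul_div_mul_right _ _ hγ.ne', mul_div_mul_right _ _ hβ.ne']
  · have e1 : M.pr (fun s y => prefixVar (t : ℕ) s = c ∧ (s t = j ∧ y = x)) = 0 :=
      M.pr_prefix_invalid hc _
    have e2 : M.pr (fun s y => prefixVar (t : ℕ) s = c ∧ (s t = j ∧ ∀ r, r ≤ t → y r = x r)) = 0 :=
      M.pr_prefix_invalid hc _
    show M.pr (fun s y => prefixVar (t : ℕ) s = c ∧ (s t = j ∧ y = x))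
        / M.pr (fun s y => s t = j ∧ y = x)
      = M.pr (fun s y => prefixVar (t : ℕ) s = c ∧ (s t = j ∧ ∀ r, r ≤ t → y r = x r))
        / M.pr (fun s y => s t = j ∧ ∀ r, r ≤ t → y r = x r)
    rw [e1, e2, zero_div, zero_div]

lemma condEnt_markov (x : Fin T → Fin V) (t : Fin T) (j : Fin J)
    (hR : 0 < M.pr (fun s y => s t = j ∧ y = x)) :
    M.condEnt (prefixVar (t : ℕ)) (fun s y => s t = j ∧ y = x)
      = M.condEnt (prefixVar (t : ℕ)) (fun s y => s t = j ∧ ∀ r, r ≤ t → y r = x r) := by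
  unfold condEnt
  congr 1
  exact Finset.sum_congr rfl fun c _ => by rw [M.cpr_markov hR c]

end HMCModel

namespace HMCModel
variable {J V T : ℕ} [NeZero J] [NeZero T] (M : HMCModel J V T)

lemma prefix_succ_iff {t : Fin T} {s a : Fin T → Fin J}
    (ha : prefixVar ((t : ℕ) + 1) a = a) :
    prefixVar ((t : ℕ) + 1) s = a
      ↔ (prefixVar (t : ℕ) s = prefixVar (t : ℕ) a ∧ s t = a t) := by
  constructor
  · intro h
    constructor
    · funext r
      unfold prefixVar
      by_cases hr : (r : ℕ) < (t : ℕ)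
      · rw [if_pos hr, if_pos hr]
        have h2 := congrFun h r
        unfold prefixVar at h2
        rw [if_pos (Nat.lt_succ_of_lt hr)] at h2
        exact h2
      · rw [if_neg hr, if_neg hr]
    · have h2 := congrFun h t
      unfold prefixVar at h2
      rw [if_pos (Nat.lt_succ_self _)] at h2
      exact h2
  · rintro ⟨h1, h2⟩
    funext r
    have h1r := congrFun h1 r
    unfold prefixVar at h1r ⊢
    by_cases hr : (r : ℕ) < (t : ℕ)
    · rw [if_pos (Nat.lt_succ_of_lt hr)]
      rw [if_pos hr, if_pos hr] at h1r
      exact h1r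
    · by_cases hrt : (r : ℕ) = (t : ℕ)
      · have hre : r = t := Fin.ext hrt
        subst hre
        rw [if_pos (Nat.lt_succ_self _)]
        exact h2
      · have hgt : ¬ (r : ℕ) < (t : ℕ) + 1 := by omega
        rw [if_neg hgt]
        exact (valid_apply ha hgt).symm

lemma glue_valid {t : Fin T} {c : Fin T → Fin J} (hc : prefixVar (t : ℕ) c = c) (j : Fin J) :
    prefixVar ((t : ℕ) + 1) (glue t c j) = glue t c j := by
  funext r
  unfold prefixVar glue
  by_cases hr : (r : ℕ) < (t : ℕ) + 1
  · rw [if_pos hr]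
  · have hne : r ≠ t := by
      intro he
      rw [he] at hr
      exact hr (Nat.lt_succ_self _)
    rw [if_neg hr, if_neg hne]
    exact (valid_apply hc (fun hlt => hr (Nat.lt_succ_of_lt hlt))).symm

lemma glue_prefix_self {t : Fin T} {c : Fin T → Fin J} (hc : prefixVar (t : ℕ) c = c)
    (j : Fin J) : prefixVar (t : ℕ) (glue t c j) = c := by
  funext r
  unfold prefixVar glue
  by_cases hr : (r : ℕ) < (t : ℕ)
  · have hne : r ≠ t := fun he => by rw [he] at hr; exact lt_irrefl _ hr
    rw [if_pos hr, if_neg hne]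
  · rw [if_neg hr]
    exact (valid_apply hc hr).symm

lemma glue_apply_t {t : Fin T} (c : Fin T → Fin J) (j : Fin J) : glue t c j t = j := by
  unfold glue
  rw [if_pos rfl]

lemma glue_of_valid {t : Fin T} {a : Fin T → Fin J}
    (ha : prefixVar ((t : ℕ) + 1) a = a) :
    glue t (prefixVar (t : ℕ) a) (a t) = a := by
  funext r
  unfold glue prefixVar
  by_cases hrt : r = t
  · subst hrt
    rw [if_pos rfl]
  · rw [if_neg hrt]
    by_cases hr : (r : ℕ) < (t : ℕ)
    · rw [if_pos hr]
    · rw [if_neg hr]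
      have hgt : ¬ (r : ℕ) < (t : ℕ) + 1 := by
        intro hlt
        have : (r : ℕ) = (t : ℕ) := by omega
        exact hrt (Fin.ext this)
      exact (valid_apply ha hgt).symm

end HMCModel

namespace HMCModel
variable {J V T : ℕ} [NeZero J] [NeZero T] (M : HMCModel J V T)

lemma pr_prefix_invalid' {k : ℕ} {c : Fin T → Fin J} (hc : prefixVar k c ≠ c)
    (P : (Fin T → Fin J) → (Fin T → Fin V) → Prop) :
    M.pr (fun s y => prefixVar k s = c ∧ P s y) = 0 := by
  refine M.pr_eq_zero fun s y h => hc ?_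
  rw [← h.1, prefixVar_idem]

lemma sum_reindex (x : Fin T → Fin V) (t : Fin T) (φ : ℝ → ℝ) (hφ : φ 0 = 0) :
    ∑ a : Fin T → Fin J, φ (M.pr (fun s y => prefixVar ((t : ℕ) + 1) s = a ∧ y = x))
      = ∑ j : Fin J, ∑ c : Fin T → Fin J,
          φ (M.pr (fun s y => prefixVar (t : ℕ) s = c ∧ (s t = j ∧ y = x))) := by
  have h1 : ∑ a : Fin T → Fin J, φ (M.pr (fun s y => prefixVar ((t : ℕ) + 1) s = a ∧ y = x))
      = ∑ a ∈ pfilter (fun a : Fin T → Fin J => prefixVar ((t : ℕ) + 1) a = a),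
          φ (M.pr (fun s y => prefixVar ((t : ℕ) + 1) s = a ∧ y = x)) := by
    refine (Finset.sum_subset (Finset.subset_univ _) fun a _ ha => ?_).symm
    rw [M.pr_prefix_invalid' (fun hv => ha (mem_pfilter.mpr hv)), hφ]
  rw [h1, Finset.sum_comm]
  have h2 : ∑ c : Fin T → Fin J, ∑ j : Fin J,
        φ (M.pr (fun s y => prefixVar (t : ℕ) s = c ∧ (s t = j ∧ y = x)))
      = ∑ c ∈ pfilter (fun c : Fin T → Fin J => prefixVar (t : ℕ) c = c), ∑ j : Fin J,
          φ (M.pr (fun s y => prefixVar (t : ℕ) s = c ∧ (s t = j ∧ y = x))) := by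
    refine (Finset.sum_subset (Finset.subset_univ _) fun c _ hc => ?_).symm
    refine Finset.sum_eq_zero fun j _ => ?_
    rw [M.pr_prefix_invalid' (fun hv => hc (mem_pfilter.mpr hv)), hφ]
  rw [h2, ← Finset.sum_product']
  refine Finset.sum_nbij' (i := fun a => (prefixVar (t : ℕ) a, a t))
    (j := fun p => glue t p.1 p.2) ?_ ?_ ?_ ?_ ?_
  · intro a ha
    rw [mem_pfilter] at ha
    rw [Finset.mem_product]
    exact ⟨mem_pfilter.mpr (prefixVar_idem _ _), Finset.mem_univ _⟩
  · intro p hp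
    rw [Finset.mem_product, mem_pfilter] at hp
    exact mem_pfilter.mpr (glue_valid hp.1 p.2)
  · intro a ha
    rw [mem_pfilter] at ha
    exact glue_of_valid ha
  · intro p hp
    rw [Finset.mem_product, mem_pfilter] at hp
    have e1 := glue_prefix_self hp.1 p.2
    have e2 := glue_apply_t (t := t) p.1 p.2
    exact Prod.ext e1 e2
  · intro a ha
    rw [mem_pfilter] at ha
    refine congrArg φ (M.pr_congr fun s y => ?_)
    rw [prefix_succ_iff ha]
    have : prefixVar (t : ℕ) a = prefixVar (t : ℕ) (prefixVar (t : ℕ) a) :=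
      (prefixVar_idem _ _).symm
    constructor
    · rintro ⟨⟨hp, hs⟩, hy⟩
      exact ⟨hp.trans (prefixVar_idem _ _).symm ▸ hp, hs, hy⟩
    · rintro ⟨hp, hs, hy⟩
      exact ⟨⟨hp, hs⟩, hy⟩

lemma perj_entropy {ι : Type*} [Fintype ι] (P Rj : ℝ) (hP : 0 < P)
    (Q : ι → ℝ) (hQ : ∀ c, 0 ≤ Q c) (hRQ : ∑ c, Q c = Rj)
    (q : ι → ℝ) (hq : ∀ c, q c = if 0 < Rj then Q c / Rj else 0) :
    (Rj / P) * (-∑ c, q c * Real.log (q c)) - (Rj / P) * Real.log (Rj / P)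
      = -∑ c, (Q c / P) * Real.log (Q c / P) := by
  by_cases hR : 0 < Rj
  · simp only [hq, if_pos hR]
    have hsum : Rj / P = ∑ c, Q c / P := by
      rw [← Finset.sum_div, hRQ]
    have key : ∀ c, (Rj / P) * ((Q c / Rj) * Real.log (Q c / Rj))
        + (Q c / P) * Real.log (Rj / P) = (Q c / P) * Real.log (Q c / P) := by
      intro c
      rcases eq_or_lt_of_le (hQ c) with h0 | hpos
      · rw [← h0]
        simp
      · have e1 : (Rj / P) * (Q c / Rj) = Q c / P := by
          field_simp
      
        have e2 : Real.log (Q c / P) = Real.log (Q c / Rj) + Real.log (Rj / P) := by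
          rw [← Real.log_mul (div_pos hpos hR).ne' (div_pos hR hP).ne']
          congr 1
          field_simp
        rw [e2, mul_add, ← mul_assoc, e1]
    calc (Rj / P) * (-∑ c, (Q c / Rj) * Real.log (Q c / Rj))
          - (Rj / P) * Real.log (Rj / P)
        = -((Rj / P) * ∑ c, (Q c / Rj) * Real.log (Q c / Rj)
            + (∑ c, Q c / P) * Real.log (Rj / P)) := by
          rw [← hsum]
          ring
      _ = -(∑ c, ((Rj / P) * ((Q c / Rj) * Real.log (Q c / Rj))
            + (Q c / P) * Real.log (Rj / P))) := by
          rw [Finset.sum_add_distrib, Finset.mul_sum, Finset.sum_mul]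
      _ = -∑ c, (Q c / P) * Real.log (Q c / P) := by
          rw [Finset.sum_congr rfl fun c _ => key c]
  · simp only [hq, if_neg hR]
    have hR0 : Rj = 0 := le_antisymm (not_lt.mp hR) (hRQ ▸ Finset.sum_nonneg fun c _ => hQ c)
    have hQ0 : ∀ c ∈ Finset.univ, Q c = 0 :=
      (Finset.sum_eq_zero_iff_of_nonneg fun c _ => hQ c).mp (hRQ.trans hR0)
    have hQ0' : ∀ c : ι, Q c = 0 := fun c => hQ0 c (Finset.mem_univ c)
    simp [hR0, hQ0']

end HMCModel

namespace HMCModel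
variable {J V T : ℕ} [NeZero J] [NeZero T] (M : HMCModel J V T)

lemma chain_rule (x : Fin T → Fin V) (hx : 0 < M.pr (obsEq x)) (t : Fin T) :
    M.condEnt (prefixVar ((t : ℕ) + 1)) (obsEq x)
      = M.condEntGiven (prefixVar (t : ℕ)) (fun s => s t) (obsEq x)
        + M.condEnt (fun s => s t) (obsEq x) := by
  have hstj : ∀ j : Fin J, M.cpr (fun s _ => s t = j) (obsEq x)
      = M.pr (fun s y => s t = j ∧ y = x) / M.pr (obsEq x) := fun j =>
    M.cpr_of_pos _ hx
  have hpa : ∀ a : Fin T → Fin J,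
      M.cpr (fun s _ => prefixVar ((t : ℕ) + 1) s = a) (obsEq x)
        = M.pr (fun s y => prefixVar ((t : ℕ) + 1) s = a ∧ y = x) / M.pr (obsEq x) :=
    fun a => M.cpr_of_pos _ hx
  have perj : ∀ j : Fin J,
      (M.pr (fun s y => s t = j ∧ y = x) / M.pr (obsEq x)) *
          (-∑ c : Fin T → Fin J,
            M.cpr (fun s _ => prefixVar (t : ℕ) s = c) (fun s y => s t = j ∧ obsEq x s y)
              * Real.log (M.cpr (fun s _ => prefixVar (t : ℕ) s = c)
                  (fun s y => s t = j ∧ obsEq x s y)))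
        - (M.pr (fun s y => s t = j ∧ y = x) / M.pr (obsEq x)) *
            Real.log (M.pr (fun s y => s t = j ∧ y = x) / M.pr (obsEq x))
      = -∑ c : Fin T → Fin J,
          (M.pr (fun s y => prefixVar (t : ℕ) s = c ∧ (s t = j ∧ y = x)) / M.pr (obsEq x))
            * Real.log (M.pr (fun s y => prefixVar (t : ℕ) s = c ∧ (s t = j ∧ y = x))
                / M.pr (obsEq x)) := by
    intro j
    exact perj_entropy (M.pr (obsEq x)) (M.pr (fun s y => s t = j ∧ y = x)) hx
      (fun c => M.pr (fun s y => prefixVar (t : ℕ) s = c ∧ (s t = j ∧ y = x)))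
      (fun c => M.pr_nonneg _)
      (M.pr_partition (prefixVar (t : ℕ)) (fun s y => s t = j ∧ y = x)).symm
      (fun c => M.cpr (fun s _ => prefixVar (t : ℕ) s = c) (fun s y => s t = j ∧ obsEq x s y))
      (fun c => rfl)
  simp only [condEnt, condEntGiven]
  simp only [hstj, hpa]
  rw [M.sum_reindex x t
    (fun z => (z / M.pr (obsEq x)) * Real.log (z / M.pr (obsEq x))) (by simp)]
  rw [← Finset.sum_neg_distrib, ← Finset.sum_neg_distrib, ← Finset.sum_add_distrib]
  refine Finset.sum_congr rfl fun j _ => ?_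
  rw [← sub_eq_add_neg]
  exact (perj j).symm

end HMCModel


open HMCModel

/-- In a hidden Markov chain model, the partial state sequence
entropy satisfies, for every `1 ≤ t ≤ T-1`:
`H(S_0^t | X = x) = ∑_j P(S_t = j | X = x) { H(S_0^{t-1} | S_t = j, X_0^t = x_0^t)
− log P(S_t = j | X = x) }`, the sum ranging over the states `j` with
`P(S_t = j | X = x) > 0`; equivalently,
`H(S_0^t | X = x) = H(S_0^{t-1} | S_t, X = x) + H(S_t | X = x)` with
`H(S_0^{t-1} | S_t = j, X = x) = H(S_0^{t-1} | S_t = j, X_0^t = x_0^t)`. -/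
theorem hmc_partial_entropy_recursion
    {J V T : ℕ} [NeZero J] [NeZero T] (M : HMCModel J V T)
    (x : Fin T → Fin V) (hx : 0 < M.pr (obsEq x))
    (t : Fin T) (ht : t ≠ 0)
    (L : Fin J → ℝ) (hL : ∀ j, L j = M.cpr (fun s _ => s t = j) (obsEq x)) :
    (M.condEnt (prefixVar ((t : ℕ) + 1)) (obsEq x)
      = ∑ j ∈ Finset.univ.filter (fun j : Fin J => 0 < L j),
          L j * (M.condEnt (prefixVar (t : ℕ))
                    (fun s y => s t = j ∧ ∀ r : Fin T, r ≤ t → y r = x r)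
                 - Real.log (L j)))
    ∧ M.condEnt (prefixVar ((t : ℕ) + 1)) (obsEq x)
        = M.condEntGiven (prefixVar (t : ℕ)) (fun s => s t) (obsEq x)
          + M.condEnt (fun s => s t) (obsEq x)
    ∧ ∀ j : Fin J, 0 < L j →
        M.condEnt (prefixVar (t : ℕ)) (fun s y => s t = j ∧ y = x)
          = M.condEnt (prefixVar (t : ℕ))
              (fun s y => s t = j ∧ ∀ r : Fin T, r ≤ t → y r = x r) := by
  have hLnn : ∀ j, 0 ≤ L j := fun j => by rw [hL j]; exact M.cpr_nonneg _ _
  have hpart3 : ∀ j : Fin J, 0 < L j →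
      M.condEnt (prefixVar (t : ℕ)) (fun s y => s t = j ∧ y = x)
        = M.condEnt (prefixVar (t : ℕ))
            (fun s y => s t = j ∧ ∀ r : Fin T, r ≤ t → y r = x r) := by
    intro j hj
    refine M.condEnt_markov x t j ?_
    rw [hL j, M.cpr_of_pos _ hx] at hj
    have key : 0 < M.pr (fun s y => s t = j ∧ y = x) / M.pr (obsEq x) := hj
    rcases (M.pr_nonneg (fun s y => s t = j ∧ y = x)).lt_or_eq with h | h
    · exact h
    · rw [← h, zero_div] at key
      exact absurd key (lt_irrefl 0)
  refine ⟨?_, M.chain_rule x hx t, hpart3⟩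
  rw [M.chain_rule x hx t]
  have e1 : M.condEntGiven (prefixVar (t : ℕ)) (fun s => s t) (obsEq x)
      = ∑ j : Fin J, L j * M.condEnt (prefixVar (t : ℕ)) (fun s y => s t = j ∧ y = x) := by
    simp only [condEntGiven]
    refine Finset.sum_congr rfl fun j _ => ?_
    rw [← hL j]
    rfl
  have e2 : M.condEnt (fun s => s t) (obsEq x)
      = ∑ j : Fin J, -(L j * Real.log (L j)) := by
    simp only [condEnt]
    rw [Finset.sum_neg_distrib, neg_inj]
    exact Finset.sum_congr rfl fun j _ => by rw [← hL j]
  rw [e1, e2, ← Finset.sum_add_distrib, Finset.sum_filter]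
  refine Finset.sum_congr rfl fun j _ => ?_
  by_cases h : 0 < L j
  · rw [if_pos h, ← hpart3 j h, mul_sub]
    ring
  · rw [if_neg h]
    have h0 : L j = 0 := le_antisymm (not_lt.mp h) (hLnn j)
    simp [h0]
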